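/- Let R, S, T be commutative ℂ-algebras. Let M be an (R ⊗_ℂ S)-module that is finitely generated and projective as an R-module, and let N be an (S ⊗_ℂ T)-module that is finitely generated and projective as an S-module. Then M ⊗_S N, regarded as an R-module, is finitely generated and projective. -/
import Mathlib

open TensorProduct

section Aux

variable (R S M : Type) [CommRing R] [CommRing S]
  [AddCommGroup M] [Module R M] [Module S M] [SMulCommClass S R M]
  {N₁ N₂ : Type} [AddCommGroup N₁] [Module S N₁] [AddCommGroup N₂] [Module S N₂]

/-- `lTensor` upgraded to an `R`-linear map when `R` acts on the left factor. -/
noncomputable def lTensorR (f : N₁ →ₗ[S] N₂) :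
    TensorProduct S M N₁ →ₗ[R] TensorProduct S M N₂ where
  toFun := f.lTensor M
  map_add' := map_add _
  map_smul' r x := by
    induction x using TensorProduct.induction_on with
    | zero => simp
    | tmul m n => simp [TensorProduct.smul_tmul']
    | add x y hx hy =>
      simp only [RingHom.id_apply] at hx hy ⊢
      simp only [smul_add, map_add, hx, hy]

@[simp] lemma lTensorR_tmul (f : N₁ →ₗ[S] N₂) (m : M) (n : N₁) :
    lTensorR R S M f (m ⊗ₜ n) = m ⊗ₜ f n := rfl

/-- `M ⊗[S] (Fin n → S) ≃ Fin n → M`, `R`-linearly. -/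
noncomputable def piEquivR (n : ℕ) :
    TensorProduct S M (Fin n → S) ≃ₗ[R] (Fin n → M) :=
  AddEquiv.toLinearEquiv (TensorProduct.piScalarRight S S M (Fin n)).toAddEquiv <| by
    intro r x
    induction x using TensorProduct.induction_on with
    | zero => simp
    | tmul m f =>
      ext j
      show (TensorProduct.piScalarRight S S M (Fin n)) ((r • m) ⊗ₜ[S] f) j
        = r • (TensorProduct.piScalarRight S S M (Fin n)) (m ⊗ₜ[S] f) j
      simp [TensorProduct.smul_tmul', smul_comm]
    | add x y hx hy => simp only [map_add, smul_add, hx, hy]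

end Aux

/-- let `R`, `S`, `T` be commutative `ℂ`-algebras, `M` a module
with commuting `R`- and `S`-actions (i.e. an `R ⊗ S`-module) that is finitely
generated projective over `R`, and `N` a module with commuting `S`- and
`T`-actions that is finitely generated projective over `S`.  Then `M ⊗_S N`,
as an `R`-module, is finitely generated and projective. -/
theorem stmt9 (R S T M N : Type)
    [CommRing R] [CommRing S] [CommRing T]
    [Algebra ℂ R] [Algebra ℂ S] [Algebra ℂ T]
    [AddCommGroup M] [Module R M] [Module S M]
    [SMulCommClass R S M] [SMulCommClass S R M]
    [AddCommGroup N] [Module S N] [Module T N] [SMulCommClass S T N]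
    [Module.Finite R M] [Module.Projective R M]
    [Module.Finite S N] [Module.Projective S N] :
    Module.Finite R (TensorProduct S M N) ∧
    Module.Projective R (TensorProduct S M N) := by
  obtain ⟨n, p, hp⟩ := Module.Finite.exists_fin' S N
  obtain ⟨i, hi⟩ := Module.projective_lifting_property p LinearMap.id hp
  -- R-linear maps
  set e := piEquivR R S M n
  set P' : (Fin n → M) →ₗ[R] TensorProduct S M N := (lTensorR R S M p).comp e.symm.toLinearMap
  set I' : TensorProduct S M N →ₗ[R] (Fin n → M) := e.toLinearMap.comp (lTensorR R S M i)
  have hsplit : P'.comp I' = LinearMap.id := by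
    ext x
    simp only [LinearMap.comp_apply, LinearMap.id_apply, P', I', LinearEquiv.coe_coe,
      LinearEquiv.symm_apply_apply]
    induction x using TensorProduct.induction_on with
    | zero => simp
    | tmul m nn =>
      have : p (i nn) = nn := congrFun (congrArg DFunLike.coe hi) nn
      simp [this]
    | add x y hx hy => simp [map_add, hx, hy]
  have hproj : Module.Projective R (Fin n → M) := by
    have e : (Π₀ _ : Fin n, M) ≃ₗ[R] (Fin n → M) :=
      (DFinsupp.equivFunOnFintype (ι := Fin n) (β := fun _ => M)).toLinearEquiv
        ⟨fun a b => by ext j; simp [DFinsupp.equivFunOnFintype],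
         fun c a => by ext j; simp [DFinsupp.equivFunOnFintype]⟩
    exact Module.Projective.of_equiv e
  constructor
  · haveI : Module.Finite R (Fin n → M) := Module.Finite.pi
    refine Module.Finite.of_surjective P' ?_
    intro x
    exact ⟨I' x, congrFun (congrArg DFunLike.coe hsplit) x⟩
  · exact Module.Projective.of_split I' P' hsplit
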